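/- Let k be a field and let f : U → A, g : V → A, h : V → B, k' : W → B be linear maps. Form the pushout P = (A ⊕ B)/ker-pushing, i.e., P = (A ⊕ B)/im(⟨g, -h⟩), with canonical maps ι_A : A → P and ι_B : B → P. Then the relational composite of the linear relations ker[f ; -g] ⊆ U⊕V and ker[h ; -k'] ⊆ V⊕W equals ker[ι_A∘f ; -ι_B∘k'] ⊆ U⊕W. That is: there exists v ∈ V with f(u) = g(v) and h(v) = k'(w) if and only if ι_A(f(u)) = ι_B(k'(w)) in P. -/

import Mathlib

/-- Composition of kernel relations via pushout: for linear maps `f : U → A`,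
`g : V → A`, `h : V → B`, `k' : W → B`, with pushout `P = (A × B) ⧸ im⟨g, -h⟩` and
canonical maps `ι_A, ι_B`, the relational composite of `ker[f ; -g]` and `ker[h ; -k']`
equals `ker[ι_A ∘ f ; -ι_B ∘ k']`: there exists `v` with `f u = g v` and `h v = k' w`
iff `ι_A (f u) = ι_B (k' w)` in `P`. -/
theorem kernel_relations_compose_via_pushout
    {k : Type*} [Field k]
    {U V W A B : Type*} [AddCommGroup U] [AddCommGroup V] [AddCommGroup W]
    [AddCommGroup A] [AddCommGroup B]
    [Module k U] [Module k V] [Module k W] [Module k A] [Module k B]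
    (f : U →ₗ[k] A) (g : V →ₗ[k] A) (h : V →ₗ[k] B) (k' : W →ₗ[k] B) :
    ∀ (u : U) (w : W),
      (∃ v : V, f u = g v ∧ h v = k' w) ↔
      ((LinearMap.range (g.prod (-h))).mkQ (f u, 0)
        = (LinearMap.range (g.prod (-h))).mkQ (0, k' w)) := by
  intro u w
  rw [Submodule.mkQ_apply, Submodule.mkQ_apply, Submodule.Quotient.eq]
  constructor
  · rintro ⟨v, hv1, hv2⟩
    refine ⟨v, ?_⟩
    simp [Prod.ext_iff, hv1.symm, hv2]
  · rintro ⟨v, hv⟩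
    simp only [LinearMap.prod_apply, Function.prod, LinearMap.neg_apply, Prod.ext_iff,
      Prod.fst_sub, Prod.snd_sub, sub_zero, zero_sub, neg_inj] at hv
    exact ⟨v, hv.1.symm, hv.2⟩
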